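/- Let X_1, ..., X_n be independent random vectors of dimension k, where X_i = (X_{1,i}, ..., X_{k,i}), such that for every i, X_{ℓ,i} ≥ 0 for all ℓ and Σ_{ℓ=1}^k X_{ℓ,i} ≤ 1. Let X̄_n = (1/n) Σ_{i=1}^n X_i, μ_ℓ = (1/n) Σ_{i=1}^n E[X_{ℓ,i}], μ_0 = 1 − Σ_{ℓ=1}^k μ_ℓ, and let z_1, ..., z_k be real numbers with z = (z_1, ..., z_k). Then for all t_1 ≤ 0, ..., t_k ≤ 0, Pr{X̄_n ≤ z componentwise} ≤ exp(n M(t_1, ..., t_k)), where M(t_1, ..., t_k) = − Σ_{ℓ=1}^k t_ℓ z_ℓ + ln(μ_0 + Σ_{ℓ=1}^k μ_ℓ exp(t_ℓ)). -/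

import Mathlib

open MeasureTheory ProbabilityTheory Finset

lemma exp_sum_le_aux {k : ℕ} (x t : Fin k → ℝ) (hx : ∀ ℓ, 0 ≤ x ℓ) (hs : ∑ ℓ, x ℓ ≤ 1) :
    Real.exp (∑ ℓ, t ℓ * x ℓ) ≤ (1 - ∑ ℓ, x ℓ) + ∑ ℓ, x ℓ * Real.exp (t ℓ) := by
  have h := convexOn_exp.map_sum_le (t := (Finset.univ : Finset (Option (Fin k))))
    (w := fun o => o.elim (1 - ∑ ℓ, x ℓ) x) (p := fun o => o.elim 0 t)
    (fun o _ => by cases o with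
      | none => simpa using hs
      | some ℓ => exact hx ℓ)
    (by simp [Fintype.sum_option])
    (fun o _ => Set.mem_univ _)
  simpa [Fintype.sum_option, smul_eq_mul, mul_comm] using h

/-- Chernoff-type bound for independent random vectors in the simplex: for all
`t₁ ≤ 0, ..., t_k ≤ 0`, `Pr{X̄ₙ ≤ z} ≤ exp(n M(t))`, where
`M(t) = − ∑_ℓ t_ℓ z_ℓ + ln(μ₀ + ∑_ℓ μ_ℓ exp(t_ℓ))`. -/
theorem chernoff_bound_le
    {Ω : Type*} [MeasureSpace Ω] [IsProbabilityMeasure (ℙ : Measure Ω)]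
    (n k : ℕ) (hn : 0 < n)
    (X : Fin n → Fin k → Ω → ℝ)
    (hmeas : ∀ i ℓ, Measurable (X i ℓ))
    (hindep : iIndepFun
      (fun i => fun ω ℓ => X i ℓ ω) ℙ)
    (hnonneg : ∀ i ℓ ω, 0 ≤ X i ℓ ω)
    (hsum : ∀ i ω, ∑ ℓ, X i ℓ ω ≤ 1)
    (μ : Fin k → ℝ) (hμ : ∀ ℓ, μ ℓ = (∑ i, ∫ ω, X i ℓ ω) / n)
    (μ0 : ℝ) (hμ0 : μ0 = 1 - ∑ ℓ, μ ℓ)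
    (z : Fin k → ℝ)
    (M : (Fin k → ℝ) → ℝ)
    (hM : ∀ t, M t = -∑ ℓ, t ℓ * z ℓ +
      Real.log (μ0 + ∑ ℓ, μ ℓ * Real.exp (t ℓ)))
    (t : Fin k → ℝ) (ht : ∀ ℓ, t ℓ ≤ 0) :
    ℙ {ω | ∀ ℓ, (∑ i, X i ℓ ω) / n ≤ z ℓ} ≤
      ENNReal.ofReal (Real.exp (n * M t)) := by
  have hn' : (0:ℝ) < n := Nat.cast_pos.mpr hn
  set Y : Fin n → Ω → ℝ := fun i ω => ∑ ℓ, t ℓ * X i ℓ ω with hY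
  set ε : ℝ := (n:ℝ) * ∑ ℓ, t ℓ * z ℓ with hε
  set B : ℝ := μ0 + ∑ ℓ, μ ℓ * Real.exp (t ℓ) with hB
  set a : Fin n → ℝ := fun i =>
    (1 - ∑ ℓ, ∫ ω, X i ℓ ω) + ∑ ℓ, (∫ ω, X i ℓ ω) * Real.exp (t ℓ) with ha
  have hYmeas : ∀ i, Measurable (Y i) := fun i =>
    Finset.measurable_sum _ fun ℓ _ => (hmeas i ℓ).const_mul _
  -- Y is nonpositive
  have hYle : ∀ i ω, Y i ω ≤ 0 := fun i ω =>
    Finset.sum_nonpos fun ℓ _ => mul_nonpos_of_nonpos_of_nonneg (ht ℓ) (hnonneg i ℓ ω)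
  -- independence of the Y i
  have hYindep : iIndepFun Y ℙ := by
    have := hindep.comp (fun i (v : Fin k → ℝ) => ∑ ℓ, t ℓ * v ℓ)
      (fun i => Finset.measurable_sum _ fun ℓ _ => (measurable_pi_apply ℓ).const_mul _)
    exact this
  -- integrability of exp of sums of Y's
  have hexpint : ∀ (s : Finset (Fin n)),
      Integrable (fun ω => Real.exp (1 * ∑ i ∈ s, Y i ω)) ℙ := by
    intro s
    refine ⟨(((Finset.measurable_sum s fun i _ => hYmeas i).const_mul 1).exp).aestronglyMeasurable,
      HasFiniteIntegral.of_bounded (C := 1) (ae_of_all _ fun ω => ?_)⟩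
    rw [Real.norm_eq_abs, abs_of_pos (Real.exp_pos _)]
    rw [one_mul]
    exact Real.exp_le_one_iff.mpr (Finset.sum_nonpos fun i _ => hYle i ω)
  -- integrability of X i ℓ
  have hXle1 : ∀ i ℓ ω, X i ℓ ω ≤ 1 := fun i ℓ ω =>
    le_trans (Finset.single_le_sum (fun m _ => hnonneg i m ω) (Finset.mem_univ ℓ)) (hsum i ω)
  have hXint : ∀ i ℓ, Integrable (X i ℓ) ℙ := fun i ℓ =>
    ⟨(hmeas i ℓ).aestronglyMeasurable,
      HasFiniteIntegral.of_bounded (C := 1) (ae_of_all _ fun ω => by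
        rw [Real.norm_eq_abs, abs_of_nonneg (hnonneg i ℓ ω)]; exact hXle1 i ℓ ω)⟩
  have hEnonneg : ∀ i ℓ, 0 ≤ ∫ ω, X i ℓ ω :=
    fun i ℓ => integral_nonneg fun ω => hnonneg i ℓ ω
  have hEsum : ∀ i, ∑ ℓ, ∫ ω, X i ℓ ω ≤ 1 := fun i => by
    rw [← integral_finset_sum _ fun ℓ _ => hXint i ℓ]
    calc (∫ ω, ∑ ℓ, X i ℓ ω) ≤ ∫ (_ : Ω), (1:ℝ) :=
          integral_mono (integrable_finset_sum _ fun ℓ _ => hXint i ℓ)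
            (integrable_const 1) (fun ω => hsum i ω)
      _ = 1 := by simp
  have hanonneg : ∀ i, 0 ≤ a i := fun i =>
    add_nonneg (by linarith [hEsum i])
      (Finset.sum_nonneg fun ℓ _ => mul_nonneg (hEnonneg i ℓ) (Real.exp_nonneg _))
  -- step 1: event inclusion
  have hsub : {ω | ∀ ℓ, (∑ i, X i ℓ ω) / n ≤ z ℓ} ⊆ {ω | ε ≤ (∑ i, Y i) ω} := by
    intro ω hω
    simp only [Set.mem_setOf_eq] at hω ⊢
    have hS : (∑ i, Y i) ω = ∑ ℓ, t ℓ * ∑ i, X i ℓ ω := by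
      simp only [Finset.sum_apply, hY]
      rw [Finset.sum_comm]
      exact Finset.sum_congr rfl fun ℓ _ => (Finset.mul_sum _ _ _).symm
    rw [hS, hε]
    have : ∑ ℓ, t ℓ * z ℓ ≤ ∑ ℓ, t ℓ * ((∑ i, X i ℓ ω) / n) :=
      Finset.sum_le_sum fun ℓ _ => mul_le_mul_of_nonpos_left (hω ℓ) (ht ℓ)
    calc (n:ℝ) * ∑ ℓ, t ℓ * z ℓ ≤ (n:ℝ) * ∑ ℓ, t ℓ * ((∑ i, X i ℓ ω) / n) := by
          exact mul_le_mul_of_nonneg_left this hn'.le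
      _ = ∑ ℓ, t ℓ * ∑ i, X i ℓ ω := by
          rw [Finset.mul_sum]
          exact Finset.sum_congr rfl fun ℓ _ => by
            field_simp
  -- step 2: Chernoff-Markov
  have hmark : (ℙ {ω | ε ≤ (∑ i, Y i) ω}).toReal ≤
      Real.exp (-1 * ε) * mgf (∑ i, Y i) ℙ 1 :=
    measure_ge_le_exp_mul_mgf ε zero_le_one (by simpa using hexpint Finset.univ)
  -- step 3: independence factorization
  have hfact : mgf (∑ i, Y i) ℙ 1 = ∏ i, mgf (Y i) ℙ 1 :=
    hYindep.mgf_sum hYmeas Finset.univ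
  -- step 4: per-coordinate bound
  have hbound : ∀ i, mgf (Y i) ℙ 1 ≤ a i := by
    intro i
    have hint1 : Integrable (fun ω => Real.exp (1 * Y i ω)) ℙ := by
      simpa using hexpint {i}
    have hint2 : Integrable (fun ω =>
        (1 - ∑ ℓ, X i ℓ ω) + ∑ ℓ, X i ℓ ω * Real.exp (t ℓ)) ℙ := by
      refine Integrable.add (Integrable.sub (integrable_const 1)
        (integrable_finset_sum _ fun ℓ _ => hXint i ℓ)) ?_
      exact integrable_finset_sum _ fun ℓ _ => (hXint i ℓ).mul_const _
    have hle : ∀ ω, Real.exp (1 * Y i ω) ≤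
        (1 - ∑ ℓ, X i ℓ ω) + ∑ ℓ, X i ℓ ω * Real.exp (t ℓ) := fun ω => by
      rw [one_mul]
      exact exp_sum_le_aux (fun ℓ => X i ℓ ω) t (fun ℓ => hnonneg i ℓ ω) (hsum i ω)
    calc mgf (Y i) ℙ 1 = ∫ ω, Real.exp (1 * Y i ω) := rfl
      _ ≤ ∫ ω, ((1 - ∑ ℓ, X i ℓ ω) + ∑ ℓ, X i ℓ ω * Real.exp (t ℓ)) :=
          integral_mono hint1 hint2 hle
      _ = a i := by
          have i1 : Integrable (fun ω => 1 - ∑ ℓ, X i ℓ ω) ℙ :=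
            (integrable_const 1).sub (integrable_finset_sum _ fun ℓ _ => hXint i ℓ)
          have i2 : Integrable (fun ω => ∑ ℓ, X i ℓ ω * Real.exp (t ℓ)) ℙ :=
            integrable_finset_sum _ fun ℓ _ => (hXint i ℓ).mul_const _
          rw [integral_add i1 i2,
            integral_sub (integrable_const 1)
              (integrable_finset_sum _ fun ℓ _ => hXint i ℓ),
            integral_finset_sum _ fun ℓ _ => hXint i ℓ,
            integral_finset_sum _ fun ℓ _ => (hXint i ℓ).mul_const _]
          simp [ha, integral_mul_const]
  -- sums of a
  have hμ' : ∀ ℓ, ∑ i, ∫ ω, X i ℓ ω = n * μ ℓ := fun ℓ => by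
    rw [hμ ℓ]; field_simp
  have hnB : (n:ℝ) * B =
      ((n:ℝ) - ∑ ℓ, ∑ i, ∫ ω, X i ℓ ω) + ∑ ℓ, (∑ i, ∫ ω, X i ℓ ω) * Real.exp (t ℓ) := by
    simp only [hB, hμ0]
    rw [mul_add, mul_sub, mul_one, Finset.mul_sum, Finset.mul_sum]
    congr 1
    · congr 1
      exact Finset.sum_congr rfl fun ℓ _ => (hμ' ℓ).symm
    · exact Finset.sum_congr rfl fun ℓ _ => by rw [hμ' ℓ, mul_assoc]
  have hsuma : ∑ i, a i = n * B := by
    calc ∑ i, a i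
        = (∑ i : Fin n, (1 - ∑ ℓ, ∫ ω, X i ℓ ω)) +
          ∑ i : Fin n, ∑ ℓ, (∫ ω, X i ℓ ω) * Real.exp (t ℓ) := Finset.sum_add_distrib
      _ = ((n:ℝ) - ∑ ℓ, ∑ i, ∫ ω, X i ℓ ω) +
          ∑ ℓ, (∑ i, ∫ ω, X i ℓ ω) * Real.exp (t ℓ) := by
          congr 1
          · rw [Finset.sum_sub_distrib, Finset.sum_const, Finset.card_univ,
              Fintype.card_fin, nsmul_eq_mul, mul_one, Finset.sum_comm]
          · rw [Finset.sum_comm]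
            exact Finset.sum_congr rfl fun ℓ _ => (Finset.sum_mul _ _ _).symm
      _ = n * B := hnB.symm
  -- step 5: AM-GM
  have hAMGM : ∏ i, a i ≤ B ^ n := by
    have hw : ∑ _i : Fin n, (1/(n:ℝ)) = 1 := by
      rw [Finset.sum_const, Finset.card_univ, Fintype.card_fin, nsmul_eq_mul]
      field_simp
    have hgm := Real.geom_mean_le_arith_mean_weighted Finset.univ
      (fun _ => (1/(n:ℝ))) a (fun i _ => by positivity) hw (fun i _ => hanonneg i)
    have hrhs : ∑ i, (1/(n:ℝ)) * a i = B := by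
      rw [← Finset.mul_sum, hsuma]
      field_simp
    rw [hrhs] at hgm
    calc ∏ i, a i = (∏ i, a i ^ (1/(n:ℝ))) ^ n := by
          rw [← Finset.prod_pow]
          refine (Finset.prod_congr rfl fun i _ => ?_).symm
          rw [← Real.rpow_natCast (a i ^ (1/(n:ℝ))) n, ← Real.rpow_mul (hanonneg i), one_div,
            inv_mul_cancel₀ (by exact_mod_cast hn.ne'), Real.rpow_one]
      _ ≤ B ^ n := pow_le_pow_left₀
          (Finset.prod_nonneg fun i _ => Real.rpow_nonneg (hanonneg i) _) hgm n
  -- final computation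
  have hB0 : 0 ≤ B := by
    have : 0 ≤ ∑ i, a i := Finset.sum_nonneg fun i _ => hanonneg i
    rw [hsuma] at this
    nlinarith
  have hfin : Real.exp (-1 * ε) * B ^ n ≤ Real.exp ((n:ℝ) * M t) := by
    rcases hB0.eq_or_lt with h0 | hpos
    · rw [← h0, zero_pow hn.ne', mul_zero]
      exact Real.exp_nonneg _
    · rw [hM t, mul_add, Real.exp_add, neg_one_mul, hε, mul_neg]
      rw [Real.exp_nat_mul, Real.exp_log hpos]
  refine le_trans ?_ (ENNReal.ofReal_le_ofReal hfin)
  rw [ENNReal.le_ofReal_iff_toReal_le (measure_ne_top _ _)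
    (mul_nonneg (Real.exp_nonneg _) (pow_nonneg hB0 _))]
  calc (ℙ {ω | ∀ ℓ, (∑ i, X i ℓ ω) / n ≤ z ℓ}).toReal
      ≤ (ℙ {ω | ε ≤ (∑ i, Y i) ω}).toReal :=
        ENNReal.toReal_mono (measure_ne_top _ _) (measure_mono hsub)
    _ ≤ Real.exp (-1 * ε) * mgf (∑ i, Y i) ℙ 1 := hmark
    _ = Real.exp (-1 * ε) * ∏ i, mgf (Y i) ℙ 1 := by rw [hfact]
    _ ≤ Real.exp (-1 * ε) * ∏ i, a i := by
        refine mul_le_mul_of_nonneg_left ?_ (Real.exp_nonneg _)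
        exact Finset.prod_le_prod (fun i _ => mgf_nonneg) (fun i _ => hbound i)
    _ ≤ Real.exp (-1 * ε) * B ^ n :=
        mul_le_mul_of_nonneg_left hAMGM (Real.exp_nonneg _)
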